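/- For every n ≥ 1, the sum Σ over pairs (d₁,d₂) of positive integers with lcm(d₁,d₂) = n of gcd(d₁,d₂) equals Σ_{d|n} σ(d)·μ(n/d)², where σ is the sum-of-divisors function. -/

import Mathlib

open ArithmeticFunction Finset
open scoped ArithmeticFunction.sigma ArithmeticFunction.Moebius

namespace LcmGcdSumAux

lemma eq_of_dvd_mul_eq {a b m n : ℕ} (ha : a ∣ m) (hb : b ∣ n) (hm : 0 < m) (hn : 0 < n)
    (h : a * b = m * n) : a = m ∧ b = n := by
  have ha' : a ≤ m := Nat.le_of_dvd hm ha
  have hb' : b ≤ n := Nat.le_of_dvd hn hb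
  have hbpos : 0 < b := by
    rcases Nat.eq_zero_or_pos b with hb0 | hb0
    · rw [hb0, mul_zero] at h; exact absurd h.symm (Nat.mul_ne_zero hm.ne' hn.ne')
    · exact hb0
  have hA : a = m := by
    by_contra hne
    have hlt : a < m := lt_of_le_of_ne ha' hne
    nlinarith
  refine ⟨hA, ?_⟩
  subst hA
  exact Nat.eq_of_mul_eq_mul_left hm h

lemma gcd_mul_left_eq {m n a b : ℕ} (hmn : Nat.Coprime m n) (ha : a ∣ m) (hb : b ∣ n) :
    Nat.gcd (a * b) m = a := by
  have hbm : Nat.Coprime b m := Nat.Coprime.coprime_dvd_left hb hmn.symm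
  rw [Nat.Coprime.gcd_mul_right_cancel a hbm, Nat.gcd_eq_left ha]

lemma gcd_mul_right_eq {m n a b : ℕ} (hmn : Nat.Coprime m n) (ha : a ∣ m) (hb : b ∣ n) :
    Nat.gcd (a * b) n = b := by
  have han : Nat.Coprime a n := Nat.Coprime.coprime_dvd_left ha hmn
  rw [Nat.Coprime.gcd_mul_left_cancel b han, Nat.gcd_eq_left hb]

lemma gcd_mul_gcd {m n a1 a2 b1 b2 : ℕ} (hmn : Nat.Coprime m n)
    (ha1 : a1 ∣ m) (ha2 : a2 ∣ m) (hb1 : b1 ∣ n) (hb2 : b2 ∣ n) :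
    Nat.gcd (a1 * b1) (a2 * b2) = Nat.gcd a1 a2 * Nat.gcd b1 b2 := by
  have hx : Nat.gcd (a1 * b1) (a2 * b2) ∣ m * n :=
    (Nat.gcd_dvd_right _ _).trans (mul_dvd_mul ha2 hb2)
  have key := (Nat.gcd_mul_gcd_eq_iff_dvd_mul_of_coprime hmn).mpr hx
  have hb1a2 : Nat.Coprime b1 a2 :=
    Nat.Coprime.coprime_dvd_right ha2 (Nat.Coprime.coprime_dvd_left hb1 hmn.symm)
  have ha1b2 : Nat.Coprime a1 b2 :=
    Nat.Coprime.coprime_dvd_right hb2 (Nat.Coprime.coprime_dvd_left ha1 hmn)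
  have h1 : Nat.gcd (Nat.gcd (a1 * b1) (a2 * b2)) m = Nat.gcd a1 a2 := by
    rw [Nat.gcd_assoc, gcd_mul_left_eq hmn ha2 hb2,
      Nat.Coprime.gcd_mul_right_cancel a1 hb1a2]
  have h2 : Nat.gcd (Nat.gcd (a1 * b1) (a2 * b2)) n = Nat.gcd b1 b2 := by
    rw [Nat.gcd_assoc, gcd_mul_right_eq hmn ha2 hb2,
      Nat.Coprime.gcd_mul_left_cancel b1 ha1b2]
  rw [← key, h1, h2]

lemma lcm_mul_lcm {m n a1 a2 b1 b2 : ℕ} (hmn : Nat.Coprime m n)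
    (ha1 : a1 ∣ m) (ha2 : a2 ∣ m) (hb1 : b1 ∣ n) (hb2 : b2 ∣ n)
    (hp1 : 0 < a1) (hp2 : 0 < a2) (hq1 : 0 < b1) (hq2 : 0 < b2) :
    Nat.lcm (a1 * b1) (a2 * b2) = Nat.lcm a1 a2 * Nat.lcm b1 b2 := by
  have h := Nat.gcd_mul_lcm (a1 * b1) (a2 * b2)
  rw [gcd_mul_gcd hmn ha1 ha2 hb1 hb2] at h
  have h2 : Nat.gcd a1 a2 * Nat.gcd b1 b2 * (Nat.lcm a1 a2 * Nat.lcm b1 b2)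
      = a1 * b1 * (a2 * b2) := by
    have e1 := Nat.gcd_mul_lcm a1 a2
    have e2 := Nat.gcd_mul_lcm b1 b2
    calc Nat.gcd a1 a2 * Nat.gcd b1 b2 * (Nat.lcm a1 a2 * Nat.lcm b1 b2)
        = (Nat.gcd a1 a2 * Nat.lcm a1 a2) * (Nat.gcd b1 b2 * Nat.lcm b1 b2) := by ring
      _ = (a1 * a2) * (b1 * b2) := by rw [e1, e2]
      _ = a1 * b1 * (a2 * b2) := by ring
  have hgpos : 0 < Nat.gcd a1 a2 * Nat.gcd b1 b2 :=
    Nat.mul_pos (Nat.gcd_pos_of_pos_left _ hp1) (Nat.gcd_pos_of_pos_left _ hq1)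
  exact Nat.eq_of_mul_eq_mul_left hgpos (h.trans h2.symm)

/-- The left-hand side as an arithmetic function. -/
noncomputable def F : ArithmeticFunction ℤ :=
  ⟨fun n => ∑ d₁ ∈ n.divisors, ∑ d₂ ∈ n.divisors,
      if Nat.lcm d₁ d₂ = n then (Nat.gcd d₁ d₂ : ℤ) else 0, by simp⟩

lemma F_apply (n : ℕ) : F n = ∑ d₁ ∈ n.divisors, ∑ d₂ ∈ n.divisors,
    if Nat.lcm d₁ d₂ = n then (Nat.gcd d₁ d₂ : ℤ) else 0 := rfl

/-- The right-hand side as an arithmetic function. -/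
noncomputable def G : ArithmeticFunction ℤ :=
  (↑(σ 1) : ArithmeticFunction ℤ) * (pmul (μ : ArithmeticFunction ℤ) μ)

lemma G_apply (n : ℕ) :
    G n = ∑ d ∈ n.divisors, (σ 1 d : ℤ) * (μ (n / d) : ℤ) ^ 2 := by
  rw [G, mul_apply, Nat.sum_divisorsAntidiagonal
    (fun i j => ((σ 1 : ArithmeticFunction ℤ) i) * (pmul (μ : ArithmeticFunction ℤ) μ) j)]
  refine Finset.sum_congr rfl fun d _ => ?_
  simp [pmul_apply, sq]

lemma hG : G.IsMultiplicative :=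
  (isMultiplicative_sigma.natCast).mul
    (isMultiplicative_moebius.pmul isMultiplicative_moebius)

lemma hF : F.IsMultiplicative := by
  constructor
  · simp [F_apply]
  · intro m n hmn
    rcases Nat.eq_zero_or_pos m with hm | hm
    · subst hm
      rw [Nat.coprime_zero_left] at hmn
      subst hmn
      simp [F_apply]
    rcases Nat.eq_zero_or_pos n with hn | hn
    · subst hn
      rw [Nat.coprime_zero_right] at hmn
      subst hmn
      simp [F_apply]
    have hmn0 : m * n ≠ 0 := Nat.mul_ne_zero hm.ne' hn.ne'
    symm
    rw [F_apply, F_apply, F_apply, ← Finset.sum_product', ← Finset.sum_product',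
      Finset.sum_mul_sum, ← Finset.sum_product', ← Finset.sum_product']
    refine Finset.sum_nbij' (i := fun q => (q.1.1 * q.2.1, q.1.2 * q.2.2))
      (j := fun d => ((Nat.gcd d.1 m, Nat.gcd d.2 m), (Nat.gcd d.1 n, Nat.gcd d.2 n)))
      ?_ ?_ ?_ ?_ ?_
    · rintro ⟨⟨a1, a2⟩, ⟨b1, b2⟩⟩ hq
      simp only [Finset.mem_product, Nat.mem_divisors] at hq ⊢
      exact ⟨⟨mul_dvd_mul hq.1.1.1 hq.2.1.1, hmn0⟩, ⟨mul_dvd_mul hq.1.2.1 hq.2.2.1, hmn0⟩⟩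
    · rintro ⟨d1, d2⟩ hd
      simp only [Finset.mem_product, Nat.mem_divisors] at hd ⊢
      exact ⟨⟨⟨Nat.gcd_dvd_right _ _, hm.ne'⟩, ⟨Nat.gcd_dvd_right _ _, hm.ne'⟩⟩,
        ⟨⟨Nat.gcd_dvd_right _ _, hn.ne'⟩, ⟨Nat.gcd_dvd_right _ _, hn.ne'⟩⟩⟩
    · rintro ⟨⟨a1, a2⟩, ⟨b1, b2⟩⟩ hq
      simp only [Finset.mem_product, Nat.mem_divisors] at hq
      obtain ⟨⟨⟨ha1, -⟩, ⟨ha2, -⟩⟩, ⟨⟨hb1, -⟩, ⟨hb2, -⟩⟩⟩ := hq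
      simp only [Prod.mk.injEq]
      exact ⟨⟨gcd_mul_left_eq hmn ha1 hb1, gcd_mul_left_eq hmn ha2 hb2⟩,
        ⟨gcd_mul_right_eq hmn ha1 hb1, gcd_mul_right_eq hmn ha2 hb2⟩⟩
    · rintro ⟨d1, d2⟩ hd
      simp only [Finset.mem_product, Nat.mem_divisors] at hd
      simp only [Prod.mk.injEq]
      exact ⟨(Nat.gcd_mul_gcd_eq_iff_dvd_mul_of_coprime hmn).mpr hd.1.1,
        (Nat.gcd_mul_gcd_eq_iff_dvd_mul_of_coprime hmn).mpr hd.2.1⟩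
    · rintro ⟨⟨a1, a2⟩, ⟨b1, b2⟩⟩ hq
      simp only [Finset.mem_product, Nat.mem_divisors] at hq
      obtain ⟨⟨⟨ha1, -⟩, ⟨ha2, -⟩⟩, ⟨⟨hb1, -⟩, ⟨hb2, -⟩⟩⟩ := hq
      have hp1 : 0 < a1 := Nat.pos_of_dvd_of_pos ha1 hm
      have hp2 : 0 < a2 := Nat.pos_of_dvd_of_pos ha2 hm
      have hq1 : 0 < b1 := Nat.pos_of_dvd_of_pos hb1 hn
      have hq2 : 0 < b2 := Nat.pos_of_dvd_of_pos hb2 hn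
      have hlcm := lcm_mul_lcm hmn ha1 ha2 hb1 hb2 hp1 hp2 hq1 hq2
      have hgcd := gcd_mul_gcd hmn ha1 ha2 hb1 hb2
      dsimp only
      by_cases h1 : Nat.lcm a1 a2 = m
      · by_cases h2 : Nat.lcm b1 b2 = n
        · rw [if_pos h1, if_pos h2, if_pos (by rw [hlcm, h1, h2]), hgcd]
          push_cast; ring
        · rw [if_neg h2, mul_zero, if_neg]
          intro hc
          rw [hlcm] at hc
          exact h2 (eq_of_dvd_mul_eq (Nat.lcm_dvd ha1 ha2) (Nat.lcm_dvd hb1 hb2) hm hn hc).2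
      · rw [if_neg h1, zero_mul, if_neg]
        intro hc
        rw [hlcm] at hc
        exact h1 (eq_of_dvd_mul_eq (Nat.lcm_dvd ha1 ha2) (Nat.lcm_dvd hb1 hb2) hm hn hc).1

lemma lcm_pow {p i j : ℕ} : Nat.lcm (p ^ i) (p ^ j) = p ^ max i j := by
  rcases le_total i j with h | h
  · rw [max_eq_right h]
    exact Nat.dvd_antisymm (Nat.lcm_dvd (pow_dvd_pow p h) dvd_rfl) (Nat.dvd_lcm_right _ _)
  · rw [max_eq_left h]
    exact Nat.dvd_antisymm (Nat.lcm_dvd dvd_rfl (pow_dvd_pow p h)) (Nat.dvd_lcm_left _ _)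

lemma gcd_pow {p i j : ℕ} : Nat.gcd (p ^ i) (p ^ j) = p ^ min i j := by
  rcases le_total i j with h | h
  · rw [min_eq_left h, Nat.gcd_eq_left (pow_dvd_pow p h)]
  · rw [min_eq_right h, Nat.gcd_eq_right (pow_dvd_pow p h)]

lemma F_prime_pow {p k : ℕ} (hp : p.Prime) :
    F (p ^ k) = (∑ i ∈ range k, (p : ℤ) ^ i) + ∑ i ∈ range (k + 1), (p : ℤ) ^ i := by
  have hinj : ∀ a b : ℕ, p ^ a = p ^ b → a = b := fun a b h =>
    Nat.pow_right_injective hp.two_le h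
  rw [F_apply, Nat.sum_divisors_prime_pow hp]
  have hstep : ∀ x ∈ range (k + 1), (∑ d₂ ∈ (p ^ k).divisors,
      if Nat.lcm (p ^ x) d₂ = p ^ k then ((Nat.gcd (p ^ x) d₂ : ℤ)) else 0)
      = ∑ y ∈ range (k + 1), if max x y = k then ((p : ℤ)) ^ (min x y) else 0 := by
    intro x _
    rw [Nat.sum_divisors_prime_pow hp]
    refine Finset.sum_congr rfl fun y _ => ?_
    rw [lcm_pow, gcd_pow]
    by_cases h : max x y = k
    · rw [if_pos (by rw [h]), if_pos h]
      push_cast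
      ring
    · rw [if_neg (fun hc => h (hinj _ _ hc)), if_neg h]
  rw [Finset.sum_congr rfl hstep, Finset.sum_range_succ]
  have hlast : (∑ y ∈ range (k + 1), if max k y = k then ((p : ℤ)) ^ (min k y) else 0)
      = ∑ y ∈ range (k + 1), (p : ℤ) ^ y := by
    refine Finset.sum_congr rfl fun y hy => ?_
    rw [mem_range, Nat.lt_succ_iff] at hy
    rw [if_pos (max_eq_left hy), min_eq_right hy]
  have hrest : ∀ x ∈ range k,
      (∑ y ∈ range (k + 1), if max x y = k then ((p : ℤ)) ^ (min x y) else 0) = (p : ℤ) ^ x := by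
    intro x hx
    rw [mem_range] at hx
    have hc : ∀ y ∈ range (k + 1), (if max x y = k then ((p : ℤ)) ^ (min x y) else 0)
        = if y = k then (p : ℤ) ^ x else 0 := by
      intro y hy
      rw [mem_range, Nat.lt_succ_iff] at hy
      by_cases h : y = k
      · subst h
        rw [if_pos (max_eq_right hx.le), if_pos rfl, min_eq_left hx.le]
      · rw [if_neg (by omega), if_neg h]
    rw [Finset.sum_congr rfl hc,
      Finset.sum_ite_eq' (range (k + 1)) k (fun _ => (p : ℤ) ^ x), if_pos (by simp)]
  rw [Finset.sum_congr rfl hrest, hlast]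

lemma G_prime_pow {p k : ℕ} (hp : p.Prime) :
    G (p ^ k) = (∑ i ∈ range k, (p : ℤ) ^ i) + ∑ i ∈ range (k + 1), (p : ℤ) ^ i := by
  have hppos := hp.pos
  rw [G_apply, Nat.sum_divisors_prime_pow hp]
  have hdiv : ∀ x, x ≤ k → p ^ k / p ^ x = p ^ (k - x) := fun x hx => Nat.pow_div hx hppos
  cases k with
  | zero => simp [sigma_one_apply]
  | succ K =>
    rw [Finset.sum_range_succ, Finset.sum_range_succ]
    have h1 : p ^ (K + 1) / p ^ (K + 1) = 1 := by
      rw [hdiv _ le_rfl, Nat.sub_self, pow_zero]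
    have h2 : p ^ (K + 1) / p ^ K = p := by
      rw [hdiv _ (Nat.le_succ K), Nat.succ_sub le_rfl, Nat.sub_self, pow_one]
    have h3 : ∀ x ∈ range K, ((σ 1 (p ^ x) : ℤ) * (μ (p ^ (K + 1) / p ^ x) : ℤ) ^ 2) = 0 := by
      intro x hx
      rw [mem_range] at hx
      rw [hdiv _ (by omega), moebius_apply_prime_pow hp (by omega), if_neg (by omega)]
      ring
    rw [Finset.sum_congr rfl h3, Finset.sum_const, smul_zero, zero_add, h1, h2,
      moebius_apply_one, moebius_apply_prime hp,
      sigma_one_apply_prime_pow hp, sigma_one_apply_prime_pow hp]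
    push_cast
    ring

end LcmGcdSumAux

open ArithmeticFunction in
theorem lcm_gcd_sum_eq_sigma_mu_sq :
    ∀ n : ℕ, 1 ≤ n →
      (∑ d₁ ∈ n.divisors, ∑ d₂ ∈ n.divisors,
          if Nat.lcm d₁ d₂ = n then (Nat.gcd d₁ d₂ : ℤ) else 0) =
        ∑ d ∈ n.divisors, (sigma 1 d : ℤ) * (moebius (n / d) : ℤ) ^ 2 := by
  intro n _
  have hFG : LcmGcdSumAux.F = LcmGcdSumAux.G :=
    (ArithmeticFunction.IsMultiplicative.eq_iff_eq_on_prime_powers _ LcmGcdSumAux.hF _ LcmGcdSumAux.hG).mpr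
      (fun p i hp => by rw [LcmGcdSumAux.F_prime_pow hp, LcmGcdSumAux.G_prime_pow hp])
  rw [← LcmGcdSumAux.F_apply, ← LcmGcdSumAux.G_apply, hFG]
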